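/- Let p ∈ ℝ, ψ ∈ ℝ, and let P be a real 2×2 matrix. Concerning entrywise Lebesgue integrability of a ↦ H_{P,ψ}(a) on the interval (0,1): (i) if p ≤ −1/2, then H_{P,ψ} is integrable on (0,1) if and only if (1,0)·P·(1,0)ᵀ = 0; (ii) if −1/2 < p < 1/2, then H_{P,ψ} is integrable on (0,1); (iii) if p ≥ 1/2, then H_{P,ψ} is integrable on (0,1) if and only if (−ψ,2p)·P·(−ψ,2p)ᵀ = 0. -/

import Mathlib

open Matrix MeasureTheory Filter

noncomputable section

def matJ : Matrix (Fin 2) (Fin 2) ℝ := !![0, -1; 1, 0]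

def Dpsi (p ψ a : ℝ) : Matrix (Fin 2) (Fin 2) ℝ :=
  if p = 0 then !![1, 0; ψ * Real.log a, 1]
  else !![1, 0; ψ / (2 * p), 1] * !![a ^ p, 0; 0, a ^ (-p)] * !![1, 0; -ψ / (2 * p), 1]

def HPpsi (p ψ : ℝ) (P : Matrix (Fin 2) (Fin 2) ℝ) (a : ℝ) : Matrix (Fin 2) (Fin 2) ℝ :=
  Dpsi p ψ a * P * (Dpsi p ψ a)ᵀ

def SatRec (p : ℝ) (P : Matrix (Fin 2) (Fin 2) ℝ) (ψ : ℝ) (α β : ℕ → ℝ) : Prop :=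
  α 0 = 1 ∧ β 0 = 0 ∧ ∀ n : ℕ,
    !![α (n + 1), β (n + 1)] =
      (-1 / (((n : ℝ) + 1) * (2 * p + (n : ℝ) + 1))) •
        (!![α n, β n] * (P * matJ * !![2 * p + (n : ℝ) + 1, 0; ψ, (n : ℝ) + 1]))

def genF (c : ℕ → ℝ) (z : ℂ) : ℂ := ∑' n : ℕ, (c n : ℂ) * z ^ n

def rowAB (p ψ : ℝ) (α β : ℕ → ℝ) (a : ℝ) (z : ℂ) : Matrix (Fin 1) (Fin 2) ℂ :=
  !![((a ^ p : ℝ) : ℂ) * genF α ((a : ℂ) * z), ((a ^ p : ℝ) : ℂ) * genF β ((a : ℂ) * z)] *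
    ((Dpsi p ψ a)⁻¹).map Complex.ofReal

/-! ### Auxiliary lemmas -/

lemma HP_ne (p ψ : ℝ) (P : Matrix (Fin 2) (Fin 2) ℝ) (hp : p ≠ 0) {a : ℝ} (ha : 0 < a) :
    HPpsi p ψ P a =
      !![P 0 0 * a ^ (2*p),
         (ψ/(2*p)*P 0 0) * a ^ (2*p) + (P 0 1 - ψ/(2*p)*P 0 0);
         (ψ/(2*p)*P 0 0) * a ^ (2*p) + (P 1 0 - ψ/(2*p)*P 0 0),
         ((ψ/(2*p))^2*P 0 0) * a ^ (2*p) + (ψ/(2*p)*(P 0 1 + P 1 0) - 2*(ψ/(2*p))^2*P 0 0)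
           + ((ψ/(2*p))^2*P 0 0 - ψ/(2*p)*(P 0 1 + P 1 0) + P 1 1) * a ^ (-(2*p))] := by
  have h1 : a ^ (-p) = (a ^ p)⁻¹ := Real.rpow_neg ha.le p
  have h2 : a ^ (2*p) = a ^ p * a ^ p := by
    rw [show 2*p = p + p by ring, Real.rpow_add ha]
  have h3 : a ^ (-(2*p)) = (a ^ p * a ^ p)⁻¹ := by rw [Real.rpow_neg ha.le, h2]
  have hne : a ^ p ≠ 0 := (Real.rpow_pos_of_pos ha p).ne'
  unfold HPpsi Dpsi
  rw [if_neg hp]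
  ext i j
  fin_cases i <;> fin_cases j <;>
    · simp [Matrix.mul_apply, Matrix.vecMul, Matrix.vecHead, Matrix.vecTail,
        dotProduct, Fin.sum_univ_two, h1, h2, h3]
      try field_simp
      try ring

lemma HP_zero (ψ : ℝ) (P : Matrix (Fin 2) (Fin 2) ℝ) (a : ℝ) :
    HPpsi 0 ψ P a =
      !![P 0 0, P 0 1 + (ψ * P 0 0) * Real.log a;
         P 1 0 + (ψ * P 0 0) * Real.log a,
         P 1 1 + (ψ * (P 0 1 + P 1 0)) * Real.log a + (ψ^2 * P 0 0) * (Real.log a)^2] := by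
  unfold HPpsi Dpsi
  rw [if_pos rfl]
  ext i j
  fin_cases i <;> fin_cases j <;>
    · simp [Matrix.mul_apply, Matrix.vecMul, Matrix.vecHead, Matrix.vecTail,
        dotProduct, Fin.sum_univ_two]
      try ring

lemma rint {t : ℝ} (ht : -1 < t) : IntegrableOn (fun a : ℝ => a ^ t) (Set.Ioo 0 1) :=
  (intervalIntegral.integrableOn_Ioo_rpow_iff one_pos).2 ht

lemma cint (k : ℝ) : IntegrableOn (fun _ : ℝ => k) (Set.Ioo 0 1) :=
  integrableOn_const measure_Ioo_lt_top.ne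

lemma int1 {t : ℝ} (ht : -1 < t) (k1 : ℝ) :
    IntegrableOn (fun a : ℝ => k1 * a ^ t) (Set.Ioo 0 1) :=
  (rint ht).const_mul k1

lemma int2 {t : ℝ} (ht : -1 < t) (k1 k2 : ℝ) :
    IntegrableOn (fun a : ℝ => k1 * a ^ t + k2) (Set.Ioo 0 1) :=
  (int1 ht k1).add (cint k2)

lemma int3 {t s : ℝ} (ht : -1 < t) (hs : -1 < s) (k1 k2 k3 : ℝ) :
    IntegrableOn (fun a : ℝ => k1 * a ^ t + k2 + k3 * a ^ s) (Set.Ioo 0 1) :=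
  ((int1 ht k1).add (cint k2)).add (int1 hs k3)

lemma log_abs_le {a : ℝ} (ha : a ∈ Set.Ioo (0:ℝ) 1) (ε : ℝ) (hε : 0 < ε) :
    |Real.log a| ≤ a ^ (-ε) / ε := by
  obtain ⟨h0, h1⟩ := ha
  rw [abs_of_nonpos (Real.log_nonpos h0.le h1.le), ← Real.log_inv]
  calc Real.log a⁻¹ ≤ (a⁻¹) ^ ε / ε := Real.log_le_rpow_div (inv_nonneg.2 h0.le) hε
    _ = a ^ (-ε) / ε := by rw [Real.inv_rpow h0.le, ← Real.rpow_neg h0.le]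

lemma log_int : IntegrableOn Real.log (Set.Ioo (0:ℝ) 1) := by
  apply Integrable.mono' ((rint (by norm_num : (-1:ℝ) < -(1/2))).const_mul 2)
  · exact Real.measurable_log.aestronglyMeasurable
  · rw [ae_restrict_iff' measurableSet_Ioo]
    refine ae_of_all _ fun a ha => ?_
    have := log_abs_le ha (1/2) (by norm_num)
    rw [Real.norm_eq_abs]
    calc |Real.log a| ≤ a ^ (-(1/2):ℝ) / (1/2) := this
      _ = 2 * a ^ (-(1/2):ℝ) := by ring

lemma logsq_int : IntegrableOn (fun a => (Real.log a)^2) (Set.Ioo (0:ℝ) 1) := by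
  apply Integrable.mono' ((rint (by norm_num : (-1:ℝ) < -(1/2))).const_mul 16)
  · exact (Real.measurable_log.pow_const 2).aestronglyMeasurable
  · rw [ae_restrict_iff' measurableSet_Ioo]
    refine ae_of_all _ fun a ha => ?_
    have h := log_abs_le ha (1/4) (by norm_num)
    have h0 := ha.1
    have hb : a ^ (-(1/4):ℝ) / (1/4) = 4 * a ^ (-(1/4):ℝ) := by ring
    rw [hb] at h
    have h2 : |Real.log a|^2 ≤ (4 * a ^ (-(1/4):ℝ))^2 :=
      pow_le_pow_left₀ (abs_nonneg _) h 2
    rw [Real.norm_eq_abs, abs_of_nonneg (sq_nonneg _)]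
    calc (Real.log a)^2 = |Real.log a|^2 := (sq_abs _).symm
      _ ≤ (4 * a ^ (-(1/4):ℝ))^2 := h2
      _ = 16 * ((a ^ (-(1/4):ℝ))^(2:ℕ)) := by ring
      _ = 16 * a ^ (-(1/2):ℝ) := by
            rw [← Real.rpow_natCast (a ^ (-(1/4):ℝ)) 2, ← Real.rpow_mul h0.le]
            norm_num

lemma intlog (k0 k1 k2 : ℝ) :
    IntegrableOn (fun a : ℝ => k0 + k1 * Real.log a + k2 * (Real.log a)^2)
      (Set.Ioo (0:ℝ) 1) :=
  ((cint k0).add (log_int.const_mul k1)).add (logsq_int.const_mul k2)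

/-- integrability of H_{P,ψ} at the left endpoint 0, i.e. on (0,1). -/
theorem statement10 (p ψ : ℝ) (P : Matrix (Fin 2) (Fin 2) ℝ) :
    (p ≤ -(1/2 : ℝ) →
      ((∀ i j : Fin 2, IntegrableOn (fun a => HPpsi p ψ P a i j) (Set.Ioo (0:ℝ) 1)) ↔
        P 0 0 = 0)) ∧
    (-(1/2 : ℝ) < p → p < 1/2 →
      (∀ i j : Fin 2, IntegrableOn (fun a => HPpsi p ψ P a i j) (Set.Ioo (0:ℝ) 1))) ∧
    ((1/2 : ℝ) ≤ p →
      ((∀ i j : Fin 2, IntegrableOn (fun a => HPpsi p ψ P a i j) (Set.Ioo (0:ℝ) 1)) ↔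
        ![-ψ, 2 * p] ⬝ᵥ P.mulVec ![-ψ, 2 * p] = 0)) := by
  refine ⟨?_, ?_, ?_⟩
  · -- p ≤ -1/2
    intro hple
    have hp : p ≠ 0 := by intro h; rw [h] at hple; norm_num at hple
    have hY : (-1:ℝ) < -(2*p) := by linarith
    constructor
    · intro h
      by_contra hq
      have heq : Set.EqOn (fun a => HPpsi p ψ P a 0 0) (fun a : ℝ => P 0 0 * a ^ (2*p))
          (Set.Ioo 0 1) := fun a ha => by simp [HP_ne p ψ P hp ha.1]
      have h2 : IntegrableOn (fun a : ℝ => P 0 0 * a ^ (2*p)) (Set.Ioo 0 1) :=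
        (h 0 0).congr_fun heq measurableSet_Ioo
      have h3 : IntegrableOn (fun a : ℝ => a ^ (2*p)) (Set.Ioo 0 1) := by
        have h4 := h2.const_mul (P 0 0)⁻¹
        have e : (fun a : ℝ => (P 0 0)⁻¹ * (P 0 0 * a ^ (2*p))) = fun a : ℝ => a ^ (2*p) := by
          funext a; field_simp
        rwa [e] at h4
      have := (intervalIntegral.integrableOn_Ioo_rpow_iff one_pos).1 h3
      linarith
    · intro h0 i j
      fin_cases i <;> fin_cases j
      · exact (cint 0).congr_fun
          (fun a ha => by simp [HP_ne p ψ P hp ha.1, h0]) measurableSet_Ioo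
      · exact (cint (P 0 1)).congr_fun
          (fun a ha => by simp [HP_ne p ψ P hp ha.1, h0]) measurableSet_Ioo
      · exact (cint (P 1 0)).congr_fun
          (fun a ha => by simp [HP_ne p ψ P hp ha.1, h0]) measurableSet_Ioo
      · refine (int2 hY (P 1 1 - ψ/(2*p)*(P 0 1 + P 1 0))
          (ψ/(2*p)*(P 0 1 + P 1 0))).congr_fun (fun a ha => ?_) measurableSet_Ioo
        simp [HP_ne p ψ P hp ha.1, h0]
        try ring
  · -- -1/2 < p < 1/2
    intro hl hr i j
    by_cases hp : p = 0
    · subst hp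
      fin_cases i <;> fin_cases j
      · exact (cint (P 0 0)).congr_fun (fun a ha => by simp [HP_zero ψ P a]) measurableSet_Ioo
      · refine (intlog (P 0 1) (ψ * P 0 0) 0).congr_fun (fun a ha => ?_) measurableSet_Ioo
        simp [HP_zero ψ P a]
        try ring
      · refine (intlog (P 1 0) (ψ * P 0 0) 0).congr_fun (fun a ha => ?_) measurableSet_Ioo
        simp [HP_zero ψ P a]
        try ring
      · refine (intlog (P 1 1) (ψ * (P 0 1 + P 1 0)) (ψ^2 * P 0 0)).congr_fun
          (fun a ha => ?_) measurableSet_Ioo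
        simp [HP_zero ψ P a]
        try ring
    · have hX : (-1:ℝ) < 2*p := by linarith
      have hY : (-1:ℝ) < -(2*p) := by linarith
      fin_cases i <;> fin_cases j
      · exact (int1 hX (P 0 0)).congr_fun
          (fun a ha => by simp [HP_ne p ψ P hp ha.1]) measurableSet_Ioo
      · exact (int2 hX (ψ/(2*p)*P 0 0) (P 0 1 - ψ/(2*p)*P 0 0)).congr_fun
          (fun a ha => by simp [HP_ne p ψ P hp ha.1]) measurableSet_Ioo
      · exact (int2 hX (ψ/(2*p)*P 0 0) (P 1 0 - ψ/(2*p)*P 0 0)).congr_fun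
          (fun a ha => by simp [HP_ne p ψ P hp ha.1]) measurableSet_Ioo
      · exact (int3 hX hY ((ψ/(2*p))^2*P 0 0) (ψ/(2*p)*(P 0 1 + P 1 0) - 2*(ψ/(2*p))^2*P 0 0)
          ((ψ/(2*p))^2*P 0 0 - ψ/(2*p)*(P 0 1 + P 1 0) + P 1 1)).congr_fun
          (fun a ha => by simp [HP_ne p ψ P hp ha.1]) measurableSet_Ioo
  · -- p ≥ 1/2
    intro hpge
    have hp : p ≠ 0 := by intro h; rw [h] at hpge; norm_num at hpge
    have hX : (-1:ℝ) < 2*p := by linarith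
    have hid : ![-ψ, 2 * p] ⬝ᵥ P.mulVec ![-ψ, 2 * p] =
        4*p^2*((ψ/(2*p))^2*P 0 0 - ψ/(2*p)*(P 0 1 + P 1 0) + P 1 1) := by
      simp [dotProduct, Matrix.mulVec, Fin.sum_univ_two]
      field_simp
      ring
    constructor
    · intro h
      have hK0 : (ψ/(2*p))^2*P 0 0 - ψ/(2*p)*(P 0 1 + P 1 0) + P 1 1 = 0 := by
        by_contra hKne
        have heq : Set.EqOn (fun a => HPpsi p ψ P a 1 1)
            (fun a : ℝ => ((ψ/(2*p))^2*P 0 0) * a ^ (2*p)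
              + (ψ/(2*p)*(P 0 1 + P 1 0) - 2*(ψ/(2*p))^2*P 0 0)
              + ((ψ/(2*p))^2*P 0 0 - ψ/(2*p)*(P 0 1 + P 1 0) + P 1 1) * a ^ (-(2*p)))
            (Set.Ioo 0 1) :=
          fun a ha => by simp [HP_ne p ψ P hp ha.1]
        have h11 := (h 1 1).congr_fun heq measurableSet_Ioo
        have hg : IntegrableOn (fun a : ℝ => ((ψ/(2*p))^2*P 0 0) * a ^ (2*p)
            + (ψ/(2*p)*(P 0 1 + P 1 0) - 2*(ψ/(2*p))^2*P 0 0)) (Set.Ioo 0 1) :=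
          int2 hX _ _
        have hd : IntegrableOn (fun a : ℝ =>
            ((ψ/(2*p))^2*P 0 0 * a ^ (2*p)
              + (ψ/(2*p)*(P 0 1 + P 1 0) - 2*(ψ/(2*p))^2*P 0 0)
              + ((ψ/(2*p))^2*P 0 0 - ψ/(2*p)*(P 0 1 + P 1 0) + P 1 1) * a ^ (-(2*p)))
            - ((ψ/(2*p))^2*P 0 0 * a ^ (2*p)
              + (ψ/(2*p)*(P 0 1 + P 1 0) - 2*(ψ/(2*p))^2*P 0 0)))
            (Set.Ioo 0 1) := h11.sub hg
        have e : (fun a : ℝ =>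
            ((ψ/(2*p))^2*P 0 0 * a ^ (2*p)
              + (ψ/(2*p)*(P 0 1 + P 1 0) - 2*(ψ/(2*p))^2*P 0 0)
              + ((ψ/(2*p))^2*P 0 0 - ψ/(2*p)*(P 0 1 + P 1 0) + P 1 1) * a ^ (-(2*p)))
            - ((ψ/(2*p))^2*P 0 0 * a ^ (2*p)
              + (ψ/(2*p)*(P 0 1 + P 1 0) - 2*(ψ/(2*p))^2*P 0 0))) =
            fun a : ℝ => ((ψ/(2*p))^2*P 0 0 - ψ/(2*p)*(P 0 1 + P 1 0) + P 1 1)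
              * a ^ (-(2*p)) := by
          funext a; ring
        rw [e] at hd
        have hd' := hd
        have h4 := hd'.const_mul ((ψ/(2*p))^2*P 0 0 - ψ/(2*p)*(P 0 1 + P 1 0) + P 1 1)⁻¹
        have e2 : (fun a : ℝ => ((ψ/(2*p))^2*P 0 0 - ψ/(2*p)*(P 0 1 + P 1 0) + P 1 1)⁻¹ *
            (((ψ/(2*p))^2*P 0 0 - ψ/(2*p)*(P 0 1 + P 1 0) + P 1 1) * a ^ (-(2*p)))) =
            fun a : ℝ => a ^ (-(2*p)) := by
          funext a
          rw [← mul_assoc, inv_mul_cancel₀ hKne, one_mul]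
        rw [e2] at h4
        have := (intervalIntegral.integrableOn_Ioo_rpow_iff one_pos).1 h4
        linarith
      rw [hid, hK0, mul_zero]
    · intro hv i j
      have hK0 : (ψ/(2*p))^2*P 0 0 - ψ/(2*p)*(P 0 1 + P 1 0) + P 1 1 = 0 := by
        rw [hid] at hv
        have hp2 : (4:ℝ)*p^2 ≠ 0 := by positivity
        exact (mul_eq_zero.1 hv).resolve_left hp2
      fin_cases i <;> fin_cases j
      · exact (int1 hX (P 0 0)).congr_fun
          (fun a ha => by simp [HP_ne p ψ P hp ha.1]) measurableSet_Ioo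
      · exact (int2 hX (ψ/(2*p)*P 0 0) (P 0 1 - ψ/(2*p)*P 0 0)).congr_fun
          (fun a ha => by simp [HP_ne p ψ P hp ha.1]) measurableSet_Ioo
      · exact (int2 hX (ψ/(2*p)*P 0 0) (P 1 0 - ψ/(2*p)*P 0 0)).congr_fun
          (fun a ha => by simp [HP_ne p ψ P hp ha.1]) measurableSet_Ioo
      · refine (int2 hX ((ψ/(2*p))^2*P 0 0)
          (ψ/(2*p)*(P 0 1 + P 1 0) - 2*(ψ/(2*p))^2*P 0 0)).congr_fun
          (fun a ha => ?_) measurableSet_Ioo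
        simp [HP_ne p ψ P hp ha.1, hK0]
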